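/- For 0 < ε < 1/2 with ε = 1/N, σ > 0, and x ∈ X_N = {0, 1/N, …, (N−1)/N}, the variance of the log-correlated field satisfies E[X_x²] = σ²(log N + 1 − log 2), and for x ≠ x' ∈ X_N, E[X_x X_{x'}] = σ²(log(1/‖x−x'‖) − log 2), where ‖x−x'‖ = min{|x−x'|, 1−|x−x'|}. -/

import Mathlib

open MeasureTheory ProbabilityTheory

/-- Distance on the circle `[0,1]_∼`. -/
noncomputable def circDist (x y : ℝ) : ℝ := min |x - y| (1 - |x - y|)

/-- The width profile `f(y) = y` for `y < 1/2` and `f(y) = 1/2` otherwise. -/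
noncomputable def coneF (y : ℝ) : ℝ := if y < 1 / 2 then y else 1 / 2

/-- The cone-like subset `A_u(x)` of the half-cylinder `[0,1]_∼ × (0,∞)`. -/
def coneSet (u x : ℝ) : Set (ℝ × ℝ) :=
  {p | p.1 ∈ Set.Ico (0 : ℝ) 1 ∧ u ≤ p.2 ∧ circDist p.1 x ≤ coneF p.2 / 2}


open Set Filter


lemma circ_norm (t : ℝ) (ht : |t| ≤ 1) :
    ‖((t : ℝ) : AddCircle (1:ℝ))‖ = min |t| (1 - |t|) := by
  rw [AddCircle.norm_eq]
  simp only [inv_one, one_mul, mul_one]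
  rw [round_eq]
  rcases abs_le.mp ht with ⟨hL, hU⟩
  rcases lt_or_ge t (-(1/2)) with h | h
  · have hf : ⌊t + 1/2⌋ = -1 := by
      rw [Int.floor_eq_iff]
      constructor <;> push_cast <;> linarith
    rw [hf]
    rw [abs_of_neg (by linarith : t < 0)]
    rw [show t - ((-1 : ℤ) : ℝ) = t + 1 by push_cast; ring]
    rw [abs_of_nonneg (by linarith), min_eq_right (by linarith)]
    ring
  · rcases lt_or_ge t (1/2) with h2 | h2
    · have hf : ⌊t + 1/2⌋ = 0 := by
        rw [Int.floor_eq_iff]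
        constructor <;> push_cast <;> linarith
      rw [hf]
      push_cast
      rw [sub_zero, min_eq_left (by rcases abs_cases t with ⟨e,_⟩|⟨e,_⟩ <;> linarith)]
    · have hf : ⌊t + 1/2⌋ = 1 := by
        rw [Int.floor_eq_iff]
        constructor <;> push_cast <;> linarith
      rw [hf]
      rw [abs_of_nonneg (by linarith : (0:ℝ) ≤ t)]
      push_cast
      rw [abs_of_nonpos (by linarith), min_eq_right (by linarith)]
      ring

lemma circDist_eq_dist {a b : ℝ} (h : |a - b| ≤ 1) :
    circDist a b = dist ((a : ℝ) : AddCircle (1:ℝ)) ((b : ℝ) : AddCircle (1:ℝ)) := by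
  rw [dist_eq_norm, show ((a : ℝ) : AddCircle (1:ℝ)) - ((b : ℝ) : AddCircle (1:ℝ))
      = ((a - b : ℝ) : AddCircle (1:ℝ)) from (QuotientAddGroup.mk_sub _ _ _).symm,
    circ_norm _ h, circDist]

lemma circDist_nonneg {a b : ℝ} (h : |a - b| ≤ 1) : 0 ≤ circDist a b :=
  le_min (abs_nonneg _) (by linarith)

lemma circDist_le_half (a b : ℝ) : circDist a b ≤ 1/2 := by
  unfold circDist
  rcases le_total |a - b| (1/2) with h | h
  · exact le_trans (min_le_left _ _) h
  · exact le_trans (min_le_right _ _) (by linarith)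

open scoped ENNReal

lemma slice_vol {r x x' : ℝ} (hr0 : 0 ≤ r) (hr : r ≤ 1/4)
    (hx : x ∈ Icc (0:ℝ) 1) (hx' : x' ∈ Icc (0:ℝ) 1) :
    volume {s : ℝ | s ∈ Ico (0:ℝ) 1 ∧ circDist s x ≤ r ∧ circDist s x' ≤ r}
      = ENNReal.ofReal (2*r - circDist x x') := by
  obtain ⟨hx0, hx1⟩ := hx
  obtain ⟨hx'0, hx'1⟩ := hx'
  have hxx' : |x - x'| ≤ 1 := by rw [abs_le]; constructor <;> linarith
  set d := circDist x x' with hd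
  have hd0 : 0 ≤ d := circDist_nonneg hxx'
  have hdh : d ≤ 1/2 := circDist_le_half _ _
  -- the representative c of x - x' in [-1/2, 1/2]
  set c : ℝ := (x - x') - round (x - x') with hcdef
  have hc2 : |c| ≤ 1/2 := by simpa using abs_sub_round (x - x')
  have hmkc : ((x - x' : ℝ) : AddCircle (1:ℝ)) = ((c : ℝ) : AddCircle (1:ℝ)) := by
    have : ((round (x - x') : ℝ) : AddCircle (1:ℝ)) = 0 :=
      (AddCircle.coe_eq_zero_iff (1:ℝ)).mpr ⟨round (x - x'), by simp⟩
    calc ((x - x' : ℝ) : AddCircle (1:ℝ))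
        = ((c + (round (x - x') : ℝ) : ℝ) : AddCircle (1:ℝ)) := by rw [hcdef]; ring_nf
      _ = ((c : ℝ) : AddCircle (1:ℝ)) + ((round (x - x') : ℝ) : AddCircle (1:ℝ)) :=
          QuotientAddGroup.mk_add _ _ _
      _ = ((c : ℝ) : AddCircle (1:ℝ)) := by rw [this, add_zero]
  have habsc : |c| = d := by
    have h1 : ‖((c : ℝ) : AddCircle (1:ℝ))‖ = min |c| (1 - |c|) := circ_norm _ (by linarith)
    have h2 : ‖((x - x' : ℝ) : AddCircle (1:ℝ))‖ = min |x - x'| (1 - |x - x'|) :=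
      circ_norm _ hxx'
    rw [hmkc, h1] at h2
    rw [min_eq_left (by linarith)] at h2
    exact h2

  -- Step A: reduce to two closed balls on the additive circle
  set B : Set (AddCircle (1:ℝ)) :=
    Metric.closedBall ((x:ℝ) : AddCircle (1:ℝ)) r ∩
      Metric.closedBall ((x':ℝ) : AddCircle (1:ℝ)) r with hBdef
  have hBmeas : MeasurableSet B := measurableSet_closedBall.inter measurableSet_closedBall
  have hmkmeas : Measurable ((↑) : ℝ → AddCircle (1:ℝ)) := AddCircle.measurable_mk'
  have hC : ∀ s : ℝ, s ∈ Icc (0:ℝ) 1 →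
      (((s:ℝ) : AddCircle (1:ℝ)) ∈ B ↔ (circDist s x ≤ r ∧ circDist s x' ≤ r)) := by
    intro s hs
    obtain ⟨hs0, hs1⟩ := hs
    rw [hBdef, Set.mem_inter_iff, Metric.mem_closedBall, Metric.mem_closedBall,
      ← circDist_eq_dist (by rw [abs_le]; constructor <;> linarith),
      ← circDist_eq_dist (by rw [abs_le]; constructor <;> linarith)]
  have hstepA :
      volume {s : ℝ | s ∈ Ico (0:ℝ) 1 ∧ circDist s x ≤ r ∧ circDist s x' ≤ r} = volume B := by
    have hpre := (AddCircle.measurePreserving_mk (1:ℝ) 0).measure_preimage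
      hBmeas.nullMeasurableSet
    rw [Measure.restrict_apply (hBmeas.preimage hmkmeas)] at hpre
    rw [← hpre]
    have hioc : ((↑) : ℝ → AddCircle (1:ℝ)) ⁻¹' B ∩ Ioc 0 (0 + 1)
        = {s : ℝ | s ∈ Ioc (0:ℝ) 1 ∧ circDist s x ≤ r ∧ circDist s x' ≤ r} := by
      ext s
      simp only [Set.mem_inter_iff, Set.mem_preimage, Set.mem_setOf_eq, zero_add]
      constructor
      · rintro ⟨hmem, hs⟩
        exact ⟨hs, (hC s ⟨le_of_lt hs.1, hs.2⟩).mp hmem⟩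
      · rintro ⟨hs, hmem⟩
        exact ⟨(hC s ⟨le_of_lt hs.1, hs.2⟩).mpr hmem, hs⟩
    rw [hioc]
    apply le_antisymm
    · calc volume {s : ℝ | s ∈ Ico (0:ℝ) 1 ∧ circDist s x ≤ r ∧ circDist s x' ≤ r}
          ≤ volume ({s : ℝ | s ∈ Ioc (0:ℝ) 1 ∧ circDist s x ≤ r ∧ circDist s x' ≤ r} ∪ {0}) := by
            apply measure_mono
            intro s hs
            rcases eq_or_ne s 0 with h0 | h0
            · exact Or.inr (by simp [h0])
            · exact Or.inl ⟨⟨lt_of_le_of_ne hs.1.1 (Ne.symm h0), le_of_lt hs.1.2⟩, hs.2⟩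
        _ ≤ volume {s : ℝ | s ∈ Ioc (0:ℝ) 1 ∧ circDist s x ≤ r ∧ circDist s x' ≤ r}
              + volume ({0} : Set ℝ) := measure_union_le _ _
        _ = volume {s : ℝ | s ∈ Ioc (0:ℝ) 1 ∧ circDist s x ≤ r ∧ circDist s x' ≤ r} := by
              simp
    · calc volume {s : ℝ | s ∈ Ioc (0:ℝ) 1 ∧ circDist s x ≤ r ∧ circDist s x' ≤ r}
          ≤ volume ({s : ℝ | s ∈ Ico (0:ℝ) 1 ∧ circDist s x ≤ r ∧ circDist s x' ≤ r} ∪ {1}) := by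
            apply measure_mono
            intro s hs
            rcases eq_or_ne s 1 with h0 | h0
            · exact Or.inr (by simp [h0])
            · exact Or.inl ⟨⟨le_of_lt hs.1.1, lt_of_le_of_ne hs.1.2 h0⟩, hs.2⟩
        _ ≤ volume {s : ℝ | s ∈ Ico (0:ℝ) 1 ∧ circDist s x ≤ r ∧ circDist s x' ≤ r}
              + volume ({1} : Set ℝ) := measure_union_le _ _
        _ = volume {s : ℝ | s ∈ Ico (0:ℝ) 1 ∧ circDist s x ≤ r ∧ circDist s x' ≤ r} := by
              simp
  -- Step B: translation invariance
  have hmkx : ((x:ℝ) : AddCircle (1:ℝ))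
      = ((x':ℝ) : AddCircle (1:ℝ)) + ((c:ℝ) : AddCircle (1:ℝ)) := by
    rw [← hmkc, ← QuotientAddGroup.mk_add]
    norm_num
  have htrans : volume B
      = volume (Metric.closedBall (((c:ℝ)) : AddCircle (1:ℝ)) r ∩
          Metric.closedBall (0 : AddCircle (1:ℝ)) r) := by
    rw [← measure_preimage_add volume (((x':ℝ)) : AddCircle (1:ℝ)) B]
    congr 1
    ext u
    simp only [Set.mem_preimage, hBdef, Set.mem_inter_iff, Metric.mem_closedBall]
    have hdd : dist (((x':ℝ) : AddCircle (1:ℝ)) + u) ((x':ℝ) : AddCircle (1:ℝ)) = dist u 0 := by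
      have := dist_add_left (((x':ℝ) : AddCircle (1:ℝ))) u 0
      simpa using this
    rw [hmkx, dist_add_left, hdd]
  -- Step C: pull back to an interval centered near c/2
  set P : Set ℝ := {s : ℝ | s ∈ Ioc (c/2 - 1/2) (c/2 + 1/2) ∧
      |s - c - round (s - c)| ≤ r ∧ |s - round s| ≤ r} with hPdef
  have hpull : volume (Metric.closedBall (((c:ℝ)) : AddCircle (1:ℝ)) r ∩
      Metric.closedBall (0 : AddCircle (1:ℝ)) r) = volume P := by
    have hmeas2 : MeasurableSet (Metric.closedBall (((c:ℝ)) : AddCircle (1:ℝ)) r ∩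
        Metric.closedBall (0 : AddCircle (1:ℝ)) r) :=
      measurableSet_closedBall.inter measurableSet_closedBall
    have hpre := (AddCircle.measurePreserving_mk (1:ℝ) (c/2 - 1/2)).measure_preimage
      hmeas2.nullMeasurableSet
    rw [Measure.restrict_apply (hmeas2.preimage hmkmeas)] at hpre
    rw [← hpre]
    congr 1
    ext s
    simp only [Set.mem_inter_iff, Set.mem_preimage, Metric.mem_closedBall, hPdef,
      Set.mem_setOf_eq, Set.mem_Ioc]
    have e1 : dist ((s:ℝ) : AddCircle (1:ℝ)) (((c:ℝ)) : AddCircle (1:ℝ))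
        = |s - c - round (s - c)| := by
      rw [dist_eq_norm, show ((s:ℝ) : AddCircle (1:ℝ)) - ((c:ℝ) : AddCircle (1:ℝ))
        = ((s - c : ℝ) : AddCircle (1:ℝ)) from (QuotientAddGroup.mk_sub _ _ _).symm,
        AddCircle.norm_eq]
      norm_num
    have e2 : dist ((s:ℝ) : AddCircle (1:ℝ)) (0 : AddCircle (1:ℝ)) = |s - round s| := by
      rw [dist_zero_right, AddCircle.norm_eq]
      norm_num
    rw [e1, e2, show c/2 - 1/2 + 1 = c/2 + 1/2 by ring]
    tauto
  -- Step D: compute the volume of P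
  set M : Set ℝ := Icc (max (c - r) (-r)) (min (c + r) r) with hMdef
  have hcL := abs_le.mp hc2
  have hMP : M ⊆ P := by
    intro s hs
    rw [hMdef, Set.mem_Icc] at hs
    obtain ⟨hs1, hs2⟩ := hs
    have hsr : |s| ≤ r := abs_le.mpr ⟨le_trans (le_max_right _ _) hs1,
      le_trans hs2 (min_le_right _ _)⟩
    have hscr : |s - c| ≤ r := abs_le.mpr ⟨by have := le_trans (le_max_left _ _) hs1; linarith,
      by have := le_trans hs2 (min_le_left _ _); linarith⟩
    have hsr' := abs_le.mp hsr
    have hscr' := abs_le.mp hscr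
    have hr1 : round s = 0 := by
      rw [round_eq, Int.floor_eq_iff] <;> constructor <;> push_cast <;> linarith
    have hr2 : round (s - c) = 0 := by
      rw [round_eq, Int.floor_eq_iff] <;> constructor <;> push_cast <;> linarith
    refine ⟨?_, by rw [hr2]; push_cast; rw [sub_zero]; exact hscr,
      by rw [hr1]; push_cast; rw [sub_zero]; exact hsr⟩
    rw [Set.mem_Ioc]
    rcases le_total 0 c with hc | hc
    · constructor <;> linarith
    · constructor <;> linarith
  set E1 : Set ℝ := Icc (1 - r) (c/2 + 1/2) with hE1def
  set E2 : Set ℝ := Icc (c/2 - 1/2) (r - 1) with hE2def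
  set E3 : Set ℝ := Icc (c + 1 - r) r with hE3def
  set E4 : Set ℝ := Icc (-r) (c - 1 + r) with hE4def
  have hPsub : P ⊆ (((M ∪ E1) ∪ E2) ∪ E3) ∪ E4 := by
    rintro s ⟨hsI, h2, h1⟩
    rw [Set.mem_Ioc] at hsI
    have hs34 : |s| ≤ 3/4 := abs_le.mpr ⟨by linarith, by linarith⟩
    have hsc34 : |s - c| ≤ 3/4 := abs_le.mpr ⟨by linarith, by linarith⟩
    have h1' := abs_le.mp h1
    have h2' := abs_le.mp h2
    set n := round s with hn
    set m := round (s - c) with hm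
    have hs34' := abs_le.mp hs34
    have hsc34' := abs_le.mp hsc34
    have hn1 : (-1 : ℤ) ≤ n := by
      have : (-1:ℝ) ≤ (n:ℝ) := by linarith [h1'.2]
      exact_mod_cast this
    have hn2 : n ≤ 1 := by
      have : (n:ℝ) ≤ 1 := by linarith [h1'.1]
      exact_mod_cast this
    have hm1 : (-1 : ℤ) ≤ m := by
      have : (-1:ℝ) ≤ (m:ℝ) := by linarith [h2'.2]
      exact_mod_cast this
    have hm2 : m ≤ 1 := by
      have : (m:ℝ) ≤ 1 := by linarith [h2'.1]
      exact_mod_cast this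
    interval_cases n
    · -- n = -1 : s close to -1, E2
      refine Or.inl (Or.inl (Or.inr ?_))
      rw [hE2def, Set.mem_Icc]
      have : |s - (-1 : ℤ)| ≤ r := h1
      have := abs_le.mp this
      push_cast at this
      exact ⟨le_of_lt hsI.1, by linarith [this.2]⟩
    · -- n = 0
      have hsr : |s| ≤ r := by simpa using h1
      have hsr' := abs_le.mp hsr
      interval_cases m
      · -- m = -1 : E4
        refine Or.inr ?_
        rw [hE4def, Set.mem_Icc]
        have : |s - c - (-1 : ℤ)| ≤ r := h2
        have := abs_le.mp this
        push_cast at this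
        exact ⟨hsr'.1, by linarith [this.2]⟩
      · -- m = 0 : M
        have hscr : |s - c| ≤ r := by simpa using h2
        have hscr' := abs_le.mp hscr
        refine Or.inl (Or.inl (Or.inl (Or.inl ?_)))
        rw [hMdef, Set.mem_Icc]
        exact ⟨max_le (by linarith) hsr'.1, le_min (by linarith) hsr'.2⟩
      · -- m = 1 : E3
        refine Or.inl (Or.inr ?_)
        rw [hE3def, Set.mem_Icc]
        have : |s - c - (1 : ℤ)| ≤ r := h2
        have := abs_le.mp this
        push_cast at this
        exact ⟨by linarith [this.1], hsr'.2⟩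
    · -- n = 1 : E1
      refine Or.inl (Or.inl (Or.inl (Or.inr ?_)))
      rw [hE1def, Set.mem_Icc]
      have : |s - (1 : ℤ)| ≤ r := h1
      have := abs_le.mp this
      push_cast at this
      exact ⟨by linarith [this.1], hsI.2⟩
  have hMvol : volume M = ENNReal.ofReal (2*r - |c|) := by
    rw [hMdef, Real.volume_Icc]
    congr 1
    rcases le_total 0 c with hc | hc
    · rw [max_eq_left (by linarith), min_eq_right (by linarith), abs_of_nonneg hc]
      ring
    · rw [max_eq_right (by linarith), min_eq_left (by linarith), abs_of_nonpos hc]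
      ring
  have hE1vol : volume E1 = 0 := by
    rw [hE1def, Real.volume_Icc, ENNReal.ofReal_eq_zero]
    linarith
  have hE2vol : volume E2 = 0 := by
    rw [hE2def, Real.volume_Icc, ENNReal.ofReal_eq_zero]
    linarith
  have hE3vol : volume E3 = 0 := by
    rw [hE3def, Real.volume_Icc, ENNReal.ofReal_eq_zero]
    linarith
  have hE4vol : volume E4 = 0 := by
    rw [hE4def, Real.volume_Icc, ENNReal.ofReal_eq_zero]
    linarith
  have hPvol : volume P = ENNReal.ofReal (2*r - |c|) := by
    apply le_antisymm
    · calc volume P ≤ volume ((((M ∪ E1) ∪ E2) ∪ E3) ∪ E4) := measure_mono hPsub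
        _ ≤ volume (((M ∪ E1) ∪ E2) ∪ E3) + volume E4 := measure_union_le _ _
        _ = volume (((M ∪ E1) ∪ E2) ∪ E3) := by rw [hE4vol, add_zero]
        _ ≤ volume ((M ∪ E1) ∪ E2) + volume E3 := measure_union_le _ _
        _ = volume ((M ∪ E1) ∪ E2) := by rw [hE3vol, add_zero]
        _ ≤ volume (M ∪ E1) + volume E2 := measure_union_le _ _
        _ = volume (M ∪ E1) := by rw [hE2vol, add_zero]
        _ ≤ volume M + volume E1 := measure_union_le _ _
        _ = volume M := by rw [hE1vol, add_zero]
        _ = ENNReal.ofReal (2*r - |c|) := hMvol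
    · rw [← hMvol]
      exact measure_mono hMP
  rw [hstepA, htrans, hpull, hPvol, habsc]


lemma oneDim {ε d : ℝ} (hε : 0 < ε) (hε2 : ε ≤ 1/2) (hd0 : 0 ≤ d) (hdh : d ≤ 1/2)
    (hed : ε ≤ d ∨ d = 0) :
    IntegrableOn (fun y : ℝ => 1/y^2 * max (min y (1/2) - d) 0) (Ici ε) ∧
    ∫ y in Ici ε, 1/y^2 * max (min y (1/2) - d) 0
      = Real.log (1/2) - Real.log (max ε d) - d / max ε d + 1 := by
  set g : ℝ → ℝ := fun y => 1/y^2 * max (min y (1/2) - d) 0 with hgdef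
  set m : ℝ := max ε d with hmdef
  have hεm : ε ≤ m := le_max_left _ _
  have hdm : d ≤ m := le_max_right _ _
  have hm0 : 0 < m := lt_of_lt_of_le hε hεm
  have hm12 : m ≤ 1/2 := max_le hε2 hdh
  have hcont : ∀ s : Set ℝ, (∀ y ∈ s, (0:ℝ) < y) → ContinuousOn g s := by
    intro s hs
    apply ContinuousOn.mul
    · exact continuousOn_const.div ((continuous_pow 2).continuousOn)
        (fun y hy => pow_ne_zero _ (ne_of_gt (hs y hy)))
    · exact (((continuous_id.min continuous_const).sub continuous_const).max
        continuous_const).continuousOn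
  have hii : ∀ a b : ℝ, 0 < a → 0 < b → IntervalIntegrable g volume a b := by
    intro a b ha hb
    apply ContinuousOn.intervalIntegrable
    apply hcont
    intro y hy
    rw [Set.mem_uIcc] at hy
    rcases hy with hy | hy
    · exact lt_of_lt_of_le (lt_min ha hb) (le_trans (min_le_left _ _) hy.1)
    · exact lt_of_lt_of_le (lt_min ha hb) (le_trans (min_le_right _ _) hy.1)
  -- middle piece
  have Imid : ∫ y in m..(1/2), g y
      = (Real.log (1/2) + d * 2) - (Real.log m + d / m) := by
    have heq : EqOn g (fun y => y⁻¹ - d * (y^2)⁻¹) (Set.uIcc m (1/2)) := by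
      intro y hy
      rw [Set.uIcc_of_le hm12, Set.mem_Icc] at hy
      have hy0 : 0 < y := lt_of_lt_of_le hm0 hy.1
      rw [hgdef]
      simp only
      rw [min_eq_left hy.2, max_eq_left (by linarith [le_trans hdm hy.1])]
      field_simp
    rw [intervalIntegral.integral_congr heq]
    have hF : ∀ y ∈ Set.uIcc m (1/2), HasDerivAt (fun z : ℝ => Real.log z + d * z⁻¹)
        (y⁻¹ - d * (y^2)⁻¹) y := by
      intro y hy
      rw [Set.uIcc_of_le hm12, Set.mem_Icc] at hy
      have hy0 : y ≠ 0 := ne_of_gt (lt_of_lt_of_le hm0 hy.1)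
      have h1 := (Real.hasDerivAt_log hy0).add ((hasDerivAt_inv hy0).const_mul d)
      have : y⁻¹ + d * (-(y^2)⁻¹) = y⁻¹ - d * (y^2)⁻¹ := by ring
      rwa [this] at h1
    have hint : IntervalIntegrable (fun y : ℝ => y⁻¹ - d * (y^2)⁻¹) volume m (1/2) := by
      apply ContinuousOn.intervalIntegrable
      apply ContinuousOn.sub
      · exact continuousOn_inv₀.mono (fun y hy => by
          rw [Set.uIcc_of_le hm12, Set.mem_Icc] at hy
          exact ne_of_gt (lt_of_lt_of_le hm0 hy.1))
      · apply ContinuousOn.mul continuousOn_const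
        apply ContinuousOn.inv₀ ((continuous_pow 2).continuousOn)
        intro y hy
        rw [Set.uIcc_of_le hm12, Set.mem_Icc] at hy
        exact pow_ne_zero _ (ne_of_gt (lt_of_lt_of_le hm0 hy.1))
    rw [intervalIntegral.integral_eq_sub_of_hasDerivAt hF hint]
    rw [div_eq_mul_inv]
    norm_num
    rw [div_eq_mul_inv]
  -- lower piece is zero
  have Ilow : ∫ y in ε..m, g y = 0 := by
    rcases hed with hed | hed
    · have hmd : m = d := max_eq_right hed
      have heq : EqOn g (fun _ => (0:ℝ)) (Set.uIcc ε m) := by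
        intro y hy
        rw [Set.uIcc_of_le hεm, Set.mem_Icc] at hy
        rw [hgdef]
        simp only
        rw [max_eq_right (by
          have h1 := min_le_left y (1/2)
          have h2 : y ≤ d := hmd ▸ hy.2
          linarith)]
        ring
      rw [intervalIntegral.integral_congr heq]
      simp
    · have : m = ε := by rw [hmdef, hed]; exact max_eq_left hε.le
      rw [this, intervalIntegral.integral_same]
  -- tail piece
  have htail_deriv : ∀ y ∈ Ici (1/2 : ℝ), HasDerivAt (fun z : ℝ => -(1/2 - d) * z⁻¹)
      ((1/2 - d) * (y^2)⁻¹) y := by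
    intro y hy
    have hy0 : y ≠ 0 := by
      have : (0:ℝ) < y := lt_of_lt_of_le (by norm_num) hy
      exact ne_of_gt this
    have h1 := (hasDerivAt_inv hy0).const_mul (-(1/2 - d))
    have : -(1/2 - d) * (-(y^2)⁻¹) = (1/2 - d) * (y^2)⁻¹ := by ring
    rwa [this] at h1
  have htail_pos : ∀ y ∈ Ioi (1/2 : ℝ), 0 ≤ (1/2 - d) * (y^2)⁻¹ := by
    intro y hy
    have h1 : (0:ℝ) < y := lt_trans (by norm_num) hy
    have h2 : (0:ℝ) ≤ 1/2 - d := by linarith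
    positivity
  have htail_tendsto : Tendsto (fun z : ℝ => -(1/2 - d) * z⁻¹) atTop (nhds 0) := by
    have := tendsto_inv_atTop_zero (𝕜 := ℝ)
    have h2 := this.const_mul (-(1/2 - d))
    simpa using h2
  have heqtail : EqOn g (fun y => (1/2 - d) * (y^2)⁻¹) (Ioi (1/2 : ℝ)) := by
    intro y hy
    rw [Set.mem_Ioi] at hy
    rw [hgdef]
    simp only
    rw [min_eq_right hy.le, max_eq_left (by linarith)]
    rw [one_div]
    ring
  have Itail : ∫ y in Ioi (1/2 : ℝ), g y = 1 - 2*d := by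
    rw [setIntegral_congr_fun measurableSet_Ioi heqtail]
    rw [integral_Ioi_of_hasDerivAt_of_nonneg' htail_deriv htail_pos htail_tendsto]
    norm_num
    ring
  have Itail_int : IntegrableOn g (Ioi (1/2 : ℝ)) := by
    rw [integrableOn_congr_fun heqtail measurableSet_Ioi]
    exact integrableOn_Ioi_deriv_of_nonneg' htail_deriv htail_pos htail_tendsto
  have Imid_int : IntegrableOn g (Ioc ε (1/2)) := by
    apply IntegrableOn.mono_set _ Set.Ioc_subset_Icc_self
    exact (hcont (Icc ε (1/2)) (fun y hy => lt_of_lt_of_le hε hy.1)).integrableOn_Icc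
  have hsplit : Ioc ε (1/2) ∪ Ioi (1/2 : ℝ) = Ioi ε := Set.Ioc_union_Ioi_eq_Ioi hε2
  constructor
  · rw [integrableOn_Ici_iff_integrableOn_Ioi, ← hsplit]
    exact Imid_int.union Itail_int
  · rw [integral_Ici_eq_integral_Ioi, ← hsplit,
      setIntegral_union (Set.Ioc_disjoint_Ioi le_rfl) measurableSet_Ioi Imid_int Itail_int,
      ← intervalIntegral.integral_of_le hε2,
      ← intervalIntegral.integral_add_adjacent_intervals (hii ε m hε hm0) (hii m (1/2) hm0 (by norm_num)),
      Ilow, Imid, Itail]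
    ring

lemma coneF_eq_min (y : ℝ) : coneF y = min y (1/2) := by
  unfold coneF
  rcases lt_or_ge y (1/2) with h | h
  · rw [if_pos h, min_eq_left h.le]
  · rw [if_neg (not_lt.mpr h), min_eq_right h]

lemma master {ε : ℝ} (hε : 0 < ε) (hε2 : ε ≤ 1/2) {x x' : ℝ}
    (hx : x ∈ Icc (0:ℝ) 1) (hx' : x' ∈ Icc (0:ℝ) 1)
    (hed : ε ≤ circDist x x' ∨ circDist x x' = 0) :
    ∫ p in coneSet ε x ∩ coneSet ε x', 1/p.2^2
      = Real.log (1/2) - Real.log (max ε (circDist x x'))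
        - circDist x x' / max ε (circDist x x') + 1 := by
  obtain ⟨hx0, hx1⟩ := hx
  obtain ⟨hx'0, hx'1⟩ := hx'
  have hxx' : |x - x'| ≤ 1 := by rw [abs_le]; constructor <;> linarith
  set d := circDist x x' with hddef
  have hd0 : 0 ≤ d := circDist_nonneg hxx'
  have hdh : d ≤ 1/2 := circDist_le_half _ _
  set S := coneSet ε x ∩ coneSet ε x' with hSdef
  -- measurability of S
  have hcd : ∀ z : ℝ, Continuous (fun s : ℝ => circDist s z) := by
    intro z
    unfold circDist
    exact ((continuous_id.sub continuous_const).abs).min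
      (continuous_const.sub (continuous_id.sub continuous_const).abs)
  have hcF : Measurable coneF := by
    simp only [funext coneF_eq_min]
    exact (continuous_id.min continuous_const).measurable
  have hcone_meas : ∀ z : ℝ, MeasurableSet (coneSet ε z) := by
    intro z
    have h1 : MeasurableSet {p : ℝ × ℝ | p.1 ∈ Set.Ico (0:ℝ) 1} :=
      measurable_fst measurableSet_Ico
    have h2 : MeasurableSet {p : ℝ × ℝ | ε ≤ p.2} :=
      measurable_snd measurableSet_Ici
    have h3 : MeasurableSet {p : ℝ × ℝ | circDist p.1 z ≤ coneF p.2 / 2} := by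
      apply measurableSet_le
      · exact ((hcd z).comp continuous_fst).measurable
      · exact (hcF.comp measurable_snd).div_const 2
    exact (h1.inter (h2.inter h3))
  have hSmeas : MeasurableSet S := (hcone_meas x).inter (hcone_meas x')
  -- convert to lintegral
  have hfmeas : Measurable (fun p : ℝ × ℝ => 1/p.2^2) :=
    (measurable_const.div ((measurable_snd.pow_const 2)))
  rw [integral_eq_lintegral_of_nonneg_ae
      (Filter.Eventually.of_forall (fun p => by positivity))
      hfmeas.aestronglyMeasurable]
  -- Fubini
  have hkey : (∫⁻ p in S, ENNReal.ofReal (1/p.2^2))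
      = ∫⁻ y in Ici ε, ENNReal.ofReal (1/y^2 * max (min y (1/2) - d) 0) := by
    rw [← lintegral_indicator hSmeas]
    rw [Measure.volume_eq_prod]
    have hmi : Measurable (fun p : ℝ × ℝ => ENNReal.ofReal (1/p.2^2)) :=
      ENNReal.measurable_ofReal.comp hfmeas
    rw [lintegral_prod_symm _ ((hmi.indicator hSmeas).aemeasurable)]
    rw [← lintegral_indicator measurableSet_Ici]
    congr 1
    funext y
    by_cases hy : ε ≤ y
    · have hy0 : 0 < y := lt_of_lt_of_le hε hy
      have hr0 : (0:ℝ) ≤ coneF y / 2 := by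
        rw [coneF_eq_min]
        have : (0:ℝ) ≤ min y (1/2) := le_min hy0.le (by norm_num)
        linarith
      have hr14 : coneF y / 2 ≤ 1/4 := by
        rw [coneF_eq_min]
        have := min_le_right y (1/2)
        linarith
      have hslice : ∀ s : ℝ, S.indicator (fun p : ℝ × ℝ => ENNReal.ofReal (1/p.2^2)) (s, y)
          = ({s : ℝ | s ∈ Ico (0:ℝ) 1 ∧ circDist s x ≤ coneF y / 2 ∧
              circDist s x' ≤ coneF y / 2}).indicator
              (fun _ => ENNReal.ofReal (1/y^2)) s := by
        intro s
        by_cases hmem : (s, y) ∈ S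
        · rw [Set.indicator_of_mem hmem, Set.indicator_of_mem]
          obtain ⟨⟨ha1, _, ha3⟩, ⟨_, _, hb3⟩⟩ := hmem
          exact ⟨ha1, ha3, hb3⟩
        · rw [Set.indicator_of_notMem hmem, Set.indicator_of_notMem]
          intro hc
          exact hmem ⟨⟨hc.1, hy, hc.2.1⟩, ⟨hc.1, hy, hc.2.2⟩⟩
      rw [show (fun s : ℝ => S.indicator (fun p : ℝ × ℝ => ENNReal.ofReal (1/p.2^2)) (s, y))
          = fun s : ℝ => ({s : ℝ | s ∈ Ico (0:ℝ) 1 ∧ circDist s x ≤ coneF y / 2 ∧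
              circDist s x' ≤ coneF y / 2}).indicator (fun _ => ENNReal.ofReal (1/y^2)) s
        from funext hslice]
      have hsmeas : MeasurableSet {s : ℝ | s ∈ Ico (0:ℝ) 1 ∧ circDist s x ≤ coneF y / 2 ∧
          circDist s x' ≤ coneF y / 2} := by
        apply MeasurableSet.inter measurableSet_Ico
        exact ((measurableSet_le (hcd x).measurable measurable_const).inter
          (measurableSet_le (hcd x').measurable measurable_const))
      rw [lintegral_indicator hsmeas, setLIntegral_const]
      rw [slice_vol hr0 hr14 ⟨hx0, hx1⟩ ⟨hx'0, hx'1⟩]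
      rw [Set.indicator_of_mem (Set.mem_Ici.mpr hy), coneF_eq_min]
      rw [show (2:ℝ) * (min y (1/2) / 2) - d = min y (1/2) - d by ring]
      rw [← ENNReal.ofReal_mul (le_of_lt (by positivity : (0:ℝ) < 1/y^2))]
      rcases le_total (min y (1/2) - d) 0 with hneg | hpos
      · rw [max_eq_right hneg, mul_zero, ENNReal.ofReal_zero, ENNReal.ofReal_eq_zero]
        have h := mul_le_mul_of_nonneg_left hneg (le_of_lt (by positivity : (0:ℝ) < 1/y^2))
        simpa using h
      · rw [max_eq_left hpos]
    · rw [Set.indicator_of_notMem (by simpa using hy)]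
      have : ∀ s : ℝ, S.indicator (fun p : ℝ × ℝ => ENNReal.ofReal (1/p.2^2)) (s, y) = 0 := by
        intro s
        apply Set.indicator_of_notMem
        intro hmem
        exact hy hmem.1.2.1
      simp only [this]
      simp
  rw [hkey]
  obtain ⟨hint, hval⟩ := oneDim hε hε2 hd0 hdh hed
  rw [← ofReal_integral_eq_lintegral_ofReal hint
      (Filter.Eventually.of_forall (fun y => by positivity))]
  rw [ENNReal.toReal_ofReal (by
    apply setIntegral_nonneg measurableSet_Ici
    intro y _
    positivity)]
  exact hval

/-- Covariance structure of the log-correlated field: if the covariances of the field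
`X` are given by the `θ`-measure (`θ(ds,dy) = y⁻² ds dy`) of intersections of cones at
height `ε = 1/N`, then `E[X_x²] = σ²(log N + 1 − log 2)` and, for `x ≠ x'`,
`E[X_x X_{x'}] = σ²(log(1/‖x−x'‖) − log 2)`. -/
theorem stmt3 {Ω : Type*} [MeasurableSpace Ω] (P : Measure Ω) [IsProbabilityMeasure P]
    (σ : ℝ) (hσ : 0 < σ) (N : ℕ) (hN : 2 < N)
    (X : ℝ → Ω → ℝ)
    (hcov : ∀ x x' : ℝ, ∫ ω, X x ω * X x' ω ∂P
      = σ ^ 2 * ∫ p in coneSet (1 / N) x ∩ coneSet (1 / N) x', 1 / p.2 ^ 2) :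
    (∀ i : Fin N, ∫ ω, (X ((i : ℝ) / N) ω) ^ 2 ∂P
        = σ ^ 2 * (Real.log N + 1 - Real.log 2)) ∧
    (∀ i j : Fin N, i ≠ j →
      ∫ ω, X ((i : ℝ) / N) ω * X ((j : ℝ) / N) ω ∂P
        = σ ^ 2 * (Real.log (1 / circDist ((i : ℝ) / N) ((j : ℝ) / N)) - Real.log 2)) := by
  have hN3 : (3:ℝ) ≤ N := by exact_mod_cast hN
  have hN0 : (0:ℝ) < N := by linarith
  have hε : (0:ℝ) < 1 / N := by positivity
  have hε2 : (1:ℝ) / N ≤ 1/2 := by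
    rw [div_le_div_iff₀ hN0 (by norm_num)]
    linarith
  have hmem : ∀ i : Fin N, (i:ℝ)/N ∈ Icc (0:ℝ) 1 := by
    intro i
    constructor
    · positivity
    · rw [div_le_one hN0]
      have : ((i:ℕ):ℝ) < N := by exact_mod_cast i.isLt
      linarith
  constructor
  · intro i
    have hself : circDist ((i:ℝ)/N) ((i:ℝ)/N) = 0 := by
      unfold circDist
      simp
    have h := hcov ((i:ℝ)/N) ((i:ℝ)/N)
    have h2 : ∫ ω, (X ((i:ℝ)/N) ω) ^ 2 ∂P = ∫ ω, X ((i:ℝ)/N) ω * X ((i:ℝ)/N) ω ∂P := by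
      simp_rw [pow_two]
    rw [h2, h, master hε hε2 (hmem i) (hmem i) (Or.inr hself), hself]
    rw [max_eq_left hε.le, zero_div, Real.log_div one_ne_zero (by norm_num),
      Real.log_div one_ne_zero (ne_of_gt hN0), Real.log_one]
    ring
  · intro i j hij
    set d := circDist ((i:ℝ)/N) ((j:ℝ)/N) with hddef
    have habs : |(i:ℝ)/N - (j:ℝ)/N| = |(i:ℝ) - (j:ℝ)| / N := by
      rw [div_sub_div_same, abs_div, abs_of_pos hN0]
    have hone : (1:ℝ) ≤ |(i:ℝ) - (j:ℝ)| := by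
      have hij' : (i:ℕ) ≠ (j:ℕ) := fun h => hij (Fin.ext h)
      have : ((i:ℕ):ℤ) ≠ ((j:ℕ):ℤ) := by exact_mod_cast hij'
      have h1 : (1:ℤ) ≤ |((i:ℕ):ℤ) - ((j:ℕ):ℤ)| := Int.one_le_abs (sub_ne_zero.mpr this)
      exact_mod_cast h1
    have hle : |(i:ℝ) - (j:ℝ)| ≤ (N:ℝ) - 1 := by
      have hi : ((i:ℕ):ℝ) + 1 ≤ N := by exact_mod_cast i.isLt
      have hj : ((j:ℕ):ℝ) + 1 ≤ N := by exact_mod_cast j.isLt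
      have hi0 : (0:ℝ) ≤ ((i:ℕ):ℝ) := Nat.cast_nonneg _
      have hj0 : (0:ℝ) ≤ ((j:ℕ):ℝ) := Nat.cast_nonneg _
      rw [abs_sub_le_iff]
      constructor <;> linarith
    have hεd : 1/(N:ℝ) ≤ d := by
      rw [hddef]
      unfold circDist
      rw [habs]
      apply le_min
      · gcongr
      · have h3 : |(i:ℝ)-(j:ℝ)|/N ≤ ((N:ℝ)-1)/N := by gcongr
        have h2 : ((N:ℝ)-1)/N = 1 - 1/N := by field_simp
        linarith
    have hd0 : (0:ℝ) < d := lt_of_lt_of_le hε hεd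
    rw [hcov, master hε hε2 (hmem i) (hmem j) (Or.inl hεd)]
    rw [← hddef, max_eq_right hεd, div_self (ne_of_gt hd0)]
    rw [Real.log_div one_ne_zero (by norm_num), Real.log_div one_ne_zero (ne_of_gt hd0),
      Real.log_one]
    ring
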